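/- Let u, v be rational numbers with v ≠ 0 satisfying 2u²v² − 2uv² + 2u² + uv − 2u + v = 0. Define x = −(4uv² + 4u + 4v − 4)/v² and y = −(8uv² − 4v² + 8u + 8v − 8)/v³. Then (x, y) satisfies y² − 3xy − 12y = x³ + 6x² + 8x. -/

import Mathlib

/-- The rational map from solutions of the quartic `2u²v² - 2uv² + 2u² + uv - 2u + v = 0`
to points on the cubic curve `y² - 3xy - 12y = x³ + 6x² + 8x`. -/
theorem quartic_to_curve (u v : ℚ) (hv : v ≠ 0)
    (h : 2 * u ^ 2 * v ^ 2 - 2 * u * v ^ 2 + 2 * u ^ 2 + u * v - 2 * u + v = 0) :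
    let x : ℚ := -(4 * u * v ^ 2 + 4 * u + 4 * v - 4) / v ^ 2
    let y : ℚ := -(8 * u * v ^ 2 - 4 * v ^ 2 + 8 * u + 8 * v - 8) / v ^ 3
    y ^ 2 - 3 * x * y - 12 * y = x ^ 3 + 6 * x ^ 2 + 8 * x := by
  intro x y
  simp only [x, y]
  have hv2 : v ^ 2 ≠ 0 := pow_ne_zero _ hv
  have hv3 : v ^ 3 ≠ 0 := pow_ne_zero _ hv
  field_simp
  linear_combination ((-32) + 32 * v - 48 * v ^ 2 + 32 * v ^ 3 - 16 * v ^ 4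
      + 32 * u + 64 * u * v ^ 2 + 32 * u * v ^ 4) * h
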